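/- Let d ≥ 1, s ∈ (0,1), p ∈ [2,∞), R₀ ∈ (0,1), k ∈ ℕ, and let u : ℝ^d → ℝ be of class C^{1,α} on the ball B_{R₀}(0) for some α > 1 − (1−s)p, with u vanishing to infinite order at 0 (for every n ∈ ℕ, u(x) = O(|x|^n) as |x| → 0). For ε > 0 and x ∈ ℝ^d define W₁(x,ε) := (1/2) ∫_{B_{(k+1)ε}(0)} [J_p(u(x)−u(x+h)) + J_p(u(x)−u(x−h))] |h|^{−d−sp} dh. Then W₁ converges to zero of arbitrary order: for every n ∈ ℕ there exist C > 0 and ε₁ > 0 such that sup_{x ∈ B_{kε}(0)} |W₁(x,ε)| ≤ C ε^n for all ε ∈ (0,ε₁). -/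

import Mathlib

open MeasureTheory Filter Asymptotics Metric Set NNReal ENNReal

noncomputable section

/-- Euclidean space `ℝ^d`. -/
abbrev Ed (d : ℕ) := EuclideanSpace ℝ (Fin d)

/-- `J_p(t) = |t|^{p-2} t`. -/
def Jp (p t : ℝ) : ℝ := |t| ^ (p - 2) * t

/-- The principal value defining the fractional `p`-Laplacian of `u` at `x` exists and
equals `L`. -/
def fracPLapAt (d : ℕ) (s p : ℝ) (u : Ed d → ℝ) (x : Ed d) (L : ℝ) : Prop :=
  Tendsto (fun δ : ℝ =>
      ∫ y in {y : Ed d | δ < ‖x - y‖}, Jp p (u x - u y) / ‖x - y‖ ^ ((d : ℝ) + s * p))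
    (nhdsWithin 0 (Ioi 0)) (nhds L)

/-- Membership in the tail space `L^{p-1}_{sp}(ℝ^d)`. -/
def memTail (d : ℕ) (s p : ℝ) (u : Ed d → ℝ) : Prop :=
  Measurable u ∧
    Integrable (fun x : Ed d => |u x| ^ (p - 1) / (1 + ‖x‖) ^ ((d : ℝ) + s * p))

/-- The moments `m_{i,k} = ∫ x_i^{2k} |x|^{-4k} |u(x)|^{p-1} |x|^{-d-sp} dx ∈ [0,∞]`. -/
def mik (d : ℕ) (s p : ℝ) (u : Ed d → ℝ) (i : Fin d) (k : ℕ) : ℝ≥0∞ :=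
  ∫⁻ x : Ed d, ENNReal.ofReal
    ((x i ^ (2 * k) / ‖x‖ ^ (4 * k)) * (|u x| ^ (p - 1) / ‖x‖ ^ ((d : ℝ) + s * p)))

/-- The Carleman-type condition: for every `i` the series `∑_{k≥1} m_{i,k}^{-1/(2k)}`
diverges to `+∞` (with conventions `1/0 = ∞`, `1/∞ = 0`). -/
def carleman (d : ℕ) (s p : ℝ) (u : Ed d → ℝ) : Prop :=
  ∀ i : Fin d, ∑' k : ℕ, (mik d s p u i (k + 1) ^ ((1 : ℝ) / (2 * ((k : ℝ) + 1))))⁻¹ = ⊤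

lemma hasDerivAt_JpFun {p : ℝ} (hp : 2 ≤ p) (t : ℝ) :
    HasDerivAt (fun t : ℝ => |t| ^ (p - 2) * t) ((p - 1) * |t| ^ (p - 2)) t := by
  rcases lt_trichotomy t 0 with ht | rfl | ht
  · have hne : -t ≠ 0 := neg_ne_zero.2 ht.ne
    have h1 : HasDerivAt (fun y : ℝ => y ^ (p - 1)) ((p - 1) * (-t) ^ (p - 1 - 1)) (-t) :=
      Real.hasDerivAt_rpow_const (Or.inl hne)
    have h2 : HasDerivAt (fun t : ℝ => -t) (-1) t := (hasDerivAt_id t).neg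
    have h3 := (h1.comp t h2).neg
    have h4 : HasDerivAt (fun t : ℝ => -((-t) ^ (p - 1))) ((p - 1) * (-t) ^ (p - 2)) t := by
      exact h3.congr_deriv (by ring_nf)
    have h5 := h4.congr_of_eventuallyEq (f₁ := fun t : ℝ => |t| ^ (p - 2) * t) ?_
    · rw [show |t| = -t from abs_of_neg ht]; exact h5
    · filter_upwards [eventually_lt_nhds ht] with y hy
      rw [abs_of_neg hy, show p - 1 = (p-2) + 1 by ring,
        Real.rpow_add_one (neg_ne_zero.2 hy.ne)]
      ring
  · rcases eq_or_lt_of_le hp with hp2 | hp2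
    · have h0 : (fun t : ℝ => |t| ^ (p - 2) * t) = fun t : ℝ => t := by
        funext t; rw [← hp2]; norm_num
      have h1 : (p - 1) * |(0:ℝ)| ^ (p - 2) = 1 := by rw [← hp2]; norm_num
      rw [h0, h1]; exact hasDerivAt_id 0
    · have hz : (p - 1) * |(0:ℝ)| ^ (p - 2) = 0 := by
        rw [abs_zero, Real.zero_rpow (by linarith)]; ring
      rw [hz, hasDerivAt_iff_isLittleO]
      simp only [sub_zero, abs_zero, smul_zero, Real.zero_rpow (show p-2 ≠ 0 by linarith),
        zero_mul, sub_zero]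
      have h1 : Tendsto (fun t : ℝ => |t| ^ (p - 2)) (nhds 0) (nhds 0) := by
        have habs : Tendsto (fun t : ℝ => |t|) (nhds 0) (nhds 0) := by
          simpa using continuous_abs.tendsto (0:ℝ)
        have h2 := (Real.continuousAt_rpow_const 0 (p-2) (Or.inr (by linarith))).tendsto
        rw [Real.zero_rpow (by linarith)] at h2
        exact h2.comp habs
      have h3 : (fun t : ℝ => |t| ^ (p - 2)) =o[nhds 0] (fun _ => (1:ℝ)) :=
        (isLittleO_one_iff ℝ).2 h1
      have h4 := h3.mul_isBigO (isBigO_refl (fun t : ℝ => t) (nhds 0))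
      simpa using h4
  · have h1 : HasDerivAt (fun y : ℝ => y ^ (p - 1)) ((p - 1) * t ^ (p - 1 - 1)) t :=
      Real.hasDerivAt_rpow_const (Or.inl ht.ne')
    have h4 : HasDerivAt (fun y : ℝ => y ^ (p - 1)) ((p - 1) * t ^ (p - 2)) t := by
      convert h1 using 2; ring_nf
    have h5 := h4.congr_of_eventuallyEq (f₁ := fun t : ℝ => |t| ^ (p - 2) * t) ?_
    · rw [show |t| = t from abs_of_pos ht]; exact h5
    · filter_upwards [eventually_gt_nhds ht] with y hy
      rw [abs_of_pos hy, show p - 1 = (p-2) + 1 by ring, Real.rpow_add_one hy.ne']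

lemma abs_Jp_add_le {p : ℝ} (hp : 2 ≤ p) (a b : ℝ) :
    |(|a| ^ (p-2) * a) + (|b| ^ (p-2) * b)| ≤ (p - 1) * (|a| + |b|) ^ (p - 2) * |a + b| := by
  set M := |a| + |b| with hM
  have hM0 : 0 ≤ M := by positivity
  have hma : -M ≤ a ∧ a ≤ M := ⟨by cases abs_cases a <;> cases abs_cases b <;> simp [hM] <;> linarith,
    by cases abs_cases a <;> simp [hM] <;> [linarith [abs_nonneg b]; linarith [abs_nonneg b]]⟩
  have hmb : -M ≤ -b ∧ -b ≤ M := ⟨by cases abs_cases b <;> simp [hM] <;> linarith [abs_nonneg a],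
    by cases abs_cases b <;> simp [hM] <;> linarith [abs_nonneg a]⟩
  have key := Convex.norm_image_sub_le_of_norm_hasDerivWithin_le
    (f := fun t : ℝ => |t| ^ (p - 2) * t) (f' := fun t => (p - 1) * |t| ^ (p - 2))
    (s := Icc (-M) M) (C := (p - 1) * M ^ (p - 2)) (x := -b) (y := a)
    (fun z _ => (hasDerivAt_JpFun hp z).hasDerivWithinAt)
    (fun z hz => by
      have hz' : |z| ≤ M := abs_le.2 ⟨hz.1, hz.2⟩
      rw [Real.norm_eq_abs, abs_mul, abs_of_nonneg (by linarith : (0:ℝ) ≤ p - 1),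
        abs_of_nonneg (Real.rpow_nonneg (abs_nonneg z) _)]
      exact mul_le_mul_of_nonneg_left
        (Real.rpow_le_rpow (abs_nonneg z) hz' (by linarith)) (by linarith))
    (convex_Icc _ _) ⟨hmb.1, hmb.2⟩ ⟨hma.1, hma.2⟩
  have heq : (fun t : ℝ => |t| ^ (p - 2) * t) a - (fun t : ℝ => |t| ^ (p - 2) * t) (-b)
      = (|a| ^ (p-2) * a) + (|b| ^ (p-2) * b) := by
    simp only [abs_neg]; ring
  rw [Real.norm_eq_abs, heq, Real.norm_eq_abs, show a - -b = a + b by ring] at key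
  exact key

lemma rpow_prod_bound {m X Y ta tb : ℝ} (hm : 0 ≤ m) (hX : m ≤ X) (hY : m ≤ Y)
    (ha : 0 ≤ ta) (hb : 0 ≤ tb) : m ^ (ta + tb) ≤ X ^ ta * Y ^ tb := by
  have hX0 : 0 ≤ X := hm.trans hX
  have hY0 : 0 ≤ Y := hm.trans hY
  rcases eq_or_lt_of_le hm with h0 | hm'
  · rcases eq_or_lt_of_le ha with ha0 | ha'
    · rcases eq_or_lt_of_le hb with hb0 | hb'
      · simp [← h0, ← ha0, ← hb0]
      · rw [← h0, Real.zero_rpow (by linarith : ta + tb ≠ 0)]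
        positivity
    · rw [← h0, Real.zero_rpow (by positivity : ta + tb ≠ 0)]
      positivity
  · rw [Real.rpow_add hm']
    exact mul_le_mul (Real.rpow_le_rpow hm hX ha) (Real.rpow_le_rpow hm hY hb)
      (Real.rpow_nonneg hm _) (Real.rpow_nonneg hX0 _)

lemma annulus_exists {r t : ℝ} (ht : 0 < t) (htr : t < r) :
    ∃ j : ℕ, r / 2 ^ (j + 1) < t ∧ t ≤ r / 2 ^ j := by
  have hr : 0 < r := ht.trans htr
  have hex : ∃ j : ℕ, r / 2 ^ (j + 1) < t := by
    obtain ⟨j, hj⟩ := pow_unbounded_of_one_lt (r / t) (one_lt_two (α := ℝ))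
    refine ⟨j, ?_⟩
    rw [div_lt_iff₀ (by positivity)]
    rw [div_lt_iff₀ ht] at hj
    calc r < 2 ^ j * t := hj
    _ ≤ 2 ^ (j + 1) * t := by
      have : (2:ℝ) ^ j ≤ 2 ^ (j+1) := by
        apply pow_le_pow_right₀ one_le_two (Nat.le_succ j)
      nlinarith
    _ = t * 2 ^ (j + 1) := by ring
  classical
  refine ⟨Nat.find hex, Nat.find_spec hex, ?_⟩
  rcases Nat.eq_zero_or_pos (Nat.find hex) with h0 | h0
  · rw [h0]; simpa using htr.le
  · have := Nat.find_min hex (Nat.sub_lt h0 one_pos)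
    push_neg at this
    calc t ≤ r / 2 ^ (Nat.find hex - 1 + 1) := this
    _ = r / 2 ^ Nat.find hex := by rw [Nat.sub_add_cancel h0]

lemma kernel_lintegral_bound (d : ℕ) (hd : 1 ≤ d) {c : ℝ} (hc : 0 < c) :
    ∃ κ : ℝ≥0∞, κ ≠ ⊤ ∧ ∀ r : ℝ, 0 < r →
      ∫⁻ h in ball (0 : Ed d) r, ENNReal.ofReal (‖h‖ ^ (c - (d:ℝ))) ≤
        κ * ENNReal.ofReal (r ^ c) := by
  haveI : Nontrivial (Ed d) := ⟨0, EuclideanSpace.single (⟨0, hd⟩ : Fin d) (1:ℝ), by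
    intro h
    have := congrArg (fun v : Ed d => v ⟨0, hd⟩) h
    simp [EuclideanSpace.single_apply] at this⟩
  set T : ℝ≥0∞ := ∑' j : ℕ, ENNReal.ofReal ((2:ℝ) ^ (-c)) ^ j with hT
  have hTne : T ≠ ⊤ := by
    rw [hT, ENNReal.tsum_geometric]
    have hlt : ENNReal.ofReal ((2:ℝ) ^ (-c)) < 1 := by
      rw [← ENNReal.ofReal_one]
      exact ENNReal.ofReal_lt_ofReal_iff_of_nonneg (by positivity) |>.2
        (Real.rpow_lt_one_of_one_lt_of_neg one_lt_two (neg_neg_of_pos hc))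
    exact ENNReal.inv_ne_top.2 (by simpa [tsub_eq_zero_iff_le] using hlt.not_ge)
  refine ⟨ENNReal.ofReal ((2:ℝ) ^ (d:ℝ)) * volume (ball (0 : Ed d) 1) * T,
    ENNReal.mul_ne_top (ENNReal.mul_ne_top ENNReal.ofReal_ne_top measure_ball_lt_top.ne) hTne,
    fun r hr => ?_⟩
  set S : ℕ → Set (Ed d) := fun j => {h | r / 2 ^ (j + 1) < ‖h‖} ∩ closedBall 0 (r / 2 ^ j)
    with hS
  have hsub : ball (0 : Ed d) r ⊆ {0} ∪ ⋃ j, S j := by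
    intro h hh
    rcases eq_or_ne h 0 with rfl | hne
    · exact Or.inl rfl
    · have hpos : 0 < ‖h‖ := norm_pos_iff.2 hne
      have hlt : ‖h‖ < r := by simpa using mem_ball.1 hh
      obtain ⟨j, hj1, hj2⟩ := annulus_exists hpos hlt
      exact Or.inr (mem_iUnion.2 ⟨j, hj1, by simpa [mem_closedBall, dist_zero_right] using hj2⟩)
  calc ∫⁻ h in ball (0 : Ed d) r, ENNReal.ofReal (‖h‖ ^ (c - (d:ℝ)))
      ≤ ∫⁻ h in {0} ∪ ⋃ j, S j, ENNReal.ofReal (‖h‖ ^ (c - (d:ℝ))) :=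
        lintegral_mono_set hsub
    _ ≤ (∫⁻ h in {(0 : Ed d)}, ENNReal.ofReal (‖h‖ ^ (c - (d:ℝ))))
        + ∫⁻ h in ⋃ j, S j, ENNReal.ofReal (‖h‖ ^ (c - (d:ℝ))) := lintegral_union_le _ _ _
    _ = ∫⁻ h in ⋃ j, S j, ENNReal.ofReal (‖h‖ ^ (c - (d:ℝ))) := by
        rw [setLIntegral_measure_zero _ _ (measure_singleton 0), zero_add]
    _ ≤ ∑' j, ∫⁻ h in S j, ENNReal.ofReal (‖h‖ ^ (c - (d:ℝ))) := lintegral_iUnion_le _ _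
    _ ≤ ∑' j, ENNReal.ofReal (r ^ c * (2:ℝ) ^ (d:ℝ) * ((2:ℝ) ^ (-c)) ^ j)
          * volume (ball (0 : Ed d) 1) := by
        refine ENNReal.tsum_le_tsum fun j => ?_
        have hkey : ∀ m : ℕ, ∀ e : ℝ, (r / 2 ^ m : ℝ) ^ e = r ^ e * ((2:ℝ) ^ (-e)) ^ m := by
          intro m e
          rw [div_eq_mul_inv, Real.mul_rpow hr.le (by positivity), ← Real.rpow_natCast (2:ℝ) m,
            ← Real.rpow_neg (by norm_num : (0:ℝ) ≤ 2), ← Real.rpow_mul (by norm_num : (0:ℝ) ≤ 2),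
            show -(m:ℝ) * e = -e * (m:ℝ) by ring,
            Real.rpow_mul (by norm_num : (0:ℝ) ≤ 2), Real.rpow_natCast]
        have hmeas : MeasurableSet (S j) :=
          (measurableSet_lt measurable_const measurable_norm).inter measurableSet_closedBall
        have hb2 : (0:ℝ) < r / 2 ^ (j + 1) := by positivity
        have hb1 : (0:ℝ) < r / 2 ^ j := by positivity
        set B : ℝ := (r / 2 ^ j) ^ c * (r / 2 ^ (j+1)) ^ (-(d:ℝ)) with hBdef
        have hB0 : 0 ≤ B := mul_nonneg (Real.rpow_nonneg hb1.le _) (Real.rpow_nonneg hb2.le _)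
        have hpt : ∀ h ∈ S j, ENNReal.ofReal (‖h‖ ^ (c - (d:ℝ))) ≤ ENNReal.ofReal B := by
          intro h hh
          obtain ⟨h1, h2⟩ := hh
          have h1 : r / 2 ^ (j+1) < ‖h‖ := h1
          have ht0 : 0 < ‖h‖ := lt_trans hb2 h1
          have h2' : ‖h‖ ≤ r / 2 ^ j := by simpa [dist_zero_right] using h2
          apply ENNReal.ofReal_le_ofReal
          have hsplit : ‖h‖ ^ (c - (d:ℝ)) = ‖h‖ ^ c * ‖h‖ ^ (-(d:ℝ)) := by
            rw [← Real.rpow_add ht0]; ring_nf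
          rw [hsplit, hBdef]
          exact mul_le_mul (Real.rpow_le_rpow ht0.le h2' hc.le)
            (Real.rpow_le_rpow_of_nonpos hb2 h1.le (by simp))
            (Real.rpow_nonneg ht0.le _) (Real.rpow_nonneg hb1.le _)
        have harith : B * (r / 2 ^ j) ^ (d : ℕ) = r ^ c * (2:ℝ) ^ (d:ℝ) * ((2:ℝ) ^ (-c)) ^ j := by
          rw [← Real.rpow_natCast (r / 2 ^ j) d, hBdef, hkey j c, hkey (j+1) (-(d:ℝ)),
            hkey j (d:ℝ), neg_neg, pow_succ]
          have h1 : r ^ (-(d:ℝ)) * r ^ (d:ℝ) = 1 := by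
            rw [← Real.rpow_add hr]; norm_num
          have h2 : ((2:ℝ) ^ (d:ℝ)) ^ j * ((2:ℝ) ^ (-(d:ℝ))) ^ j = 1 := by
            rw [← mul_pow, ← Real.rpow_add (by norm_num : (0:ℝ) < 2)]; norm_num
          calc r ^ c * ((2:ℝ) ^ (-c)) ^ j * (r ^ (-(d:ℝ)) * (((2:ℝ) ^ (d:ℝ)) ^ j * (2:ℝ) ^ (d:ℝ)))
              * (r ^ (d:ℝ) * ((2:ℝ) ^ (-(d:ℝ))) ^ j)
              = r ^ c * (2:ℝ) ^ (d:ℝ) * ((2:ℝ) ^ (-c)) ^ j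
                * ((r ^ (-(d:ℝ)) * r ^ (d:ℝ)) * (((2:ℝ) ^ (d:ℝ)) ^ j * ((2:ℝ) ^ (-(d:ℝ))) ^ j)) := by
                ring
            _ = r ^ c * (2:ℝ) ^ (d:ℝ) * ((2:ℝ) ^ (-c)) ^ j := by rw [h1, h2]; ring
        calc ∫⁻ h in S j, ENNReal.ofReal (‖h‖ ^ (c - (d:ℝ)))
            ≤ ∫⁻ _ in S j, ENNReal.ofReal B := setLIntegral_mono' hmeas hpt
          _ = ENNReal.ofReal B * volume (S j) := setLIntegral_const _ _
          _ ≤ ENNReal.ofReal B * (ENNReal.ofReal ((r / 2 ^ j) ^ (d:ℕ)) * volume (ball (0 : Ed d) 1)) := by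
              refine mul_le_mul_right ?_ _
              have := measure_mono (μ := (volume : Measure (Ed d))) (inter_subset_right (s := {h : Ed d | r / 2 ^ (j + 1) < ‖h‖}) (t := closedBall 0 (r / 2 ^ j)))
              refine this.trans ?_
              rw [Measure.addHaar_closedBall _ _ hb1.le, finrank_euclideanSpace_fin]
          _ = ENNReal.ofReal (B * (r / 2 ^ j) ^ (d:ℕ)) * volume (ball (0 : Ed d) 1) := by
              rw [ENNReal.ofReal_mul hB0, mul_assoc]
          _ = ENNReal.ofReal (r ^ c * (2:ℝ) ^ (d:ℝ) * ((2:ℝ) ^ (-c)) ^ j)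
                * volume (ball (0 : Ed d) 1) := by rw [harith]
    _ = ENNReal.ofReal ((2:ℝ) ^ (d:ℝ)) * volume (ball (0 : Ed d) 1) * T
          * ENNReal.ofReal (r ^ c) := by
        rw [hT, ← ENNReal.tsum_mul_left, ← ENNReal.tsum_mul_right]
        congr 1; funext j
        rw [ENNReal.ofReal_mul (by positivity), ENNReal.ofReal_mul (by positivity),
          ENNReal.ofReal_pow (by positivity)]
        ring

lemma holderOnWith_dist_le {X Y : Type*} [PseudoMetricSpace X] [PseudoMetricSpace Y]
    {C r : ℝ≥0} {f : X → Y} {s : Set X} (hf : HolderOnWith C r f s) {x y : X}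
    (hx : x ∈ s) (hy : y ∈ s) : dist (f x) (f y) ≤ (C:ℝ) * dist x y ^ (r : ℝ) := by
  have h := hf.edist_le hx hy
  have h2 : (C : ℝ≥0∞) * edist x y ^ (r:ℝ) = ENNReal.ofReal ((C:ℝ) * dist x y ^ (r:ℝ)) := by
    rw [edist_dist, ENNReal.ofReal_mul C.coe_nonneg,
      ← ENNReal.ofReal_rpow_of_nonneg dist_nonneg r.coe_nonneg, ENNReal.ofReal_coe_nnreal]
  rw [edist_dist (f x) (f y), h2] at h
  exact (ENNReal.ofReal_le_ofReal_iff (by positivity)).1 h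

set_option maxHeartbeats 2000000 in
/-- Claim A, case `p ≥ 2`, `u ∈ C^{1,α}`. If `u` is `C^{1,α}` on
`B_{R₀}(0)` with `α > 1-(1-s)p` and vanishes to infinite order at `0`, then
`W₁(x,ε) = (1/2)∫_{B_{(k+1)ε}(0)} [J_p(u(x)-u(x+h)) + J_p(u(x)-u(x-h))] |h|^{-d-sp} dh`
converges to zero of arbitrary order, uniformly for `x ∈ B_{kε}(0)`. -/
theorem claimA_C1alpha_p_ge_two
    (d : ℕ) (hd : 1 ≤ d) (s p : ℝ) (hs : s ∈ Ioo (0 : ℝ) 1) (hp : 2 ≤ p)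
    (R₀ : ℝ) (hR₀ : R₀ ∈ Ioo (0 : ℝ) 1) (k : ℕ)
    (u : Ed d → ℝ)
    (α : ℝ≥0) (hα_pos : 0 < α) (hα_le : (α : ℝ) ≤ 1) (hα : 1 - (1 - s) * p < (α : ℝ))
    (hdiff : DifferentiableOn ℝ u (ball (0 : Ed d) R₀))
    (hHol : ∃ C : ℝ≥0, HolderOnWith C α (fderiv ℝ u) (ball (0 : Ed d) R₀))
    (hvan : ∀ n : ℕ, u =O[nhds (0 : Ed d)] fun x => ‖x‖ ^ n) :
    ∀ n : ℕ, ∃ C > (0 : ℝ), ∃ ε₁ > (0 : ℝ), ∀ ε ∈ Ioo (0 : ℝ) ε₁,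
      ∀ x ∈ ball (0 : Ed d) (k * ε),
        |(1 / 2) * ∫ h in ball (0 : Ed d) ((k + 1) * ε),
            (Jp p (u x - u (x + h)) + Jp p (u x - u (x - h))) / ‖h‖ ^ ((d : ℝ) + s * p)|
          ≤ C * ε ^ n := by
  intro n
  obtain ⟨hs0, hs1⟩ := hs
  obtain ⟨hR0, hR1⟩ := hR₀
  obtain ⟨CH, hCH⟩ := hHol
  haveI : Nontrivial (Ed d) := ⟨0, EuclideanSpace.single (⟨0, hd⟩ : Fin d) (1:ℝ), by
    intro h
    have := congrArg (fun v : Ed d => v ⟨0, hd⟩) h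
    simp [EuclideanSpace.single_apply] at this⟩
  have hα0 : (0:ℝ) ≤ (α:ℝ) := α.coe_nonneg
  have hCH0 : (0:ℝ) ≤ (CH:ℝ) := CH.coe_nonneg
  -- exponents
  set A : ℝ := 1 + (α:ℝ) - s * p with hA
  set B : ℝ := p - 2 with hB
  have hB0 : 0 ≤ B := by rw [hB]; linarith
  have hAB : 0 < A + B := by rw [hA, hB]; linarith [hα]
  set θ : ℝ := (max 0 (-A) + B) / 2 with hθ
  have hθ0 : 0 ≤ θ := by
    rw [hθ]; have := le_max_left (0:ℝ) (-A); linarith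
  have hθB : θ ≤ B := by
    have h1 : max 0 (-A) ≤ B := max_le hB0 (by linarith)
    rw [hθ]; linarith
  set e : ℝ := A + θ with he_def
  have he : 0 < e := by
    rcases le_or_gt 0 A with h | h
    · have hm : max 0 (-A) = 0 := max_eq_left (by linarith)
      rw [he_def, hθ, hm]; linarith
    · have hm : max 0 (-A) = -A := max_eq_right (by linarith)
      rw [he_def, hθ, hm]; linarith
  set lam : ℝ := min 1 (e / (2 * (1 + (α:ℝ)))) with hlam
  have h1α : (0:ℝ) < 1 + (α:ℝ) := by linarith
  have hlam0 : 0 < lam := lt_min one_pos (by positivity)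
  have hlam1 : lam ≤ 1 := min_le_left _ _
  have hlam_e : lam * (1 + (α:ℝ)) ≤ e / 2 := by
    have h2 : lam ≤ e / (2 * (1 + (α:ℝ))) := min_le_right _ _
    calc lam * (1 + (α:ℝ)) ≤ (e / (2 * (1 + (α:ℝ)))) * (1 + (α:ℝ)) :=
          mul_le_mul_of_nonneg_right h2 h1α.le
      _ = e / 2 := by field_simp
  set e' : ℝ := e - lam * (1 + (α:ℝ)) with he'_def
  have he'0 : 0 < e' := by rw [he'_def]; linarith
  set q : ℝ := B - θ + lam with hq_def
  have hqlam : lam ≤ q := by rw [hq_def]; linarith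
  have hq0 : 0 < q := lt_of_lt_of_le hlam0 hqlam
  -- N
  set N : ℕ := ⌈(n : ℝ) / lam⌉₊ with hN
  have hNlam : (n : ℝ) ≤ (N:ℝ) * lam := by
    have h3 := Nat.le_ceil ((n : ℝ) / lam)
    rw [div_le_iff₀ hlam0] at h3
    exact h3
  -- vanishing
  obtain ⟨c₀, hc₀⟩ := isBigO_iff.mp (hvan N)
  rw [Metric.eventually_nhds_iff] at hc₀
  obtain ⟨δ, hδ0, hδ⟩ := hc₀
  set c' : ℝ := max c₀ 1 with hc'
  have hc'1 : (1:ℝ) ≤ c' := le_max_right _ _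
  have hc'0 : (0:ℝ) < c' := lt_of_lt_of_le one_pos hc'1
  have hu : ∀ z : Ed d, ‖z‖ < δ → |u z| ≤ c' * ‖z‖ ^ N := by
    intro z hz
    have h4 := hδ (by simpa [dist_zero_right] using hz)
    rw [Real.norm_eq_abs, Real.norm_eq_abs, abs_pow, abs_norm] at h4
    calc |u z| ≤ c₀ * ‖z‖ ^ N := h4
      _ ≤ c' * ‖z‖ ^ N := mul_le_mul_of_nonneg_right (le_max_left _ _) (by positivity)
  -- derivative facts
  have hder : ∀ z ∈ ball (0:Ed d) R₀, HasFDerivAt u (fderiv ℝ u z) z := fun z hz =>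
    (hdiff.differentiableAt (isOpen_ball.mem_nhds hz)).hasFDerivAt
  have taylor : ∀ x ∈ ball (0:Ed d) R₀, ∀ y ∈ ball (0:Ed d) R₀,
      |u y - u x - fderiv ℝ u x (y - x)| ≤ CH * ‖y - x‖ ^ (α:ℝ) * ‖y - x‖ := by
    intro x hx y hy
    have key := Convex.norm_image_sub_le_of_norm_hasFDerivWithin_le'
      (f := u) (f' := fderiv ℝ u) (φ := fderiv ℝ u x)
      (s := ball (0:Ed d) R₀ ∩ closedBall x ‖y - x‖)
      (C := CH * ‖y - x‖ ^ (α:ℝ))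
      (fun z hz => (hder z hz.1).hasFDerivWithinAt)
      (fun z hz => by
        have h5 : dist (fderiv ℝ u z) (fderiv ℝ u x) ≤ (CH:ℝ) * dist z x ^ (α:ℝ) :=
          holderOnWith_dist_le hCH hz.1 hx
        rw [dist_eq_norm] at h5
        refine h5.trans ?_
        have h6 : dist z x ≤ ‖y - x‖ := hz.2
        exact mul_le_mul_of_nonneg_left (Real.rpow_le_rpow dist_nonneg h6 hα0) hCH0)
      ((convex_ball _ _).inter (convex_closedBall _ _))
      ⟨hx, mem_closedBall_self (norm_nonneg _)⟩
      ⟨hy, by simp [mem_closedBall, dist_eq_norm]⟩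
    simpa [Real.norm_eq_abs] using key
  set L : ℝ := ‖fderiv ℝ u 0‖ + CH with hLdef
  have hL0 : 0 ≤ L := by rw [hLdef]; positivity
  have lip : ∀ x ∈ ball (0:Ed d) R₀, ∀ y ∈ ball (0:Ed d) R₀, |u y - u x| ≤ L * ‖y - x‖ := by
    intro x hx y hy
    have key := Convex.norm_image_sub_le_of_norm_hasFDerivWithin_le
      (f := u) (f' := fderiv ℝ u) (s := ball (0:Ed d) R₀) (C := L)
      (fun z hz => (hder z hz).hasFDerivWithinAt)
      (fun z hz => by
        have h5 : dist (fderiv ℝ u z) (fderiv ℝ u 0) ≤ (CH:ℝ) * dist z 0 ^ (α:ℝ) :=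
          holderOnWith_dist_le hCH hz (by simpa [mem_ball, dist_zero_right] using hR0)
        rw [dist_eq_norm] at h5
        have h6 : dist z (0:Ed d) ^ (α:ℝ) ≤ 1 := by
          apply Real.rpow_le_one dist_nonneg _ hα0
          have : dist z (0:Ed d) < R₀ := by simpa [mem_ball] using hz
          linarith
        calc ‖fderiv ℝ u z‖ = ‖fderiv ℝ u 0 + (fderiv ℝ u z - fderiv ℝ u 0)‖ := by
              congr 1; abel
          _ ≤ ‖fderiv ℝ u 0‖ + ‖fderiv ℝ u z - fderiv ℝ u 0‖ := norm_add_le _ _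
          _ ≤ ‖fderiv ℝ u 0‖ + CH * dist z 0 ^ (α:ℝ) := by linarith
          _ ≤ L := by
              rw [hLdef]
              have h7 : (CH:ℝ) * dist z 0 ^ (α:ℝ) ≤ (CH:ℝ) * 1 :=
                mul_le_mul_of_nonneg_left h6 hCH0
              linarith)
      (convex_ball _ _) hx hy
    simpa [Real.norm_eq_abs] using key
  -- kernel
  obtain ⟨κ, hκne, hκ⟩ := kernel_lintegral_bound d hd he'0
  -- constants
  set C₂ : ℝ := (4 * c' * (2*(k:ℝ)+2) ^ N) ^ q with hC₂
  have hC₂0 : 0 < C₂ := by rw [hC₂]; positivity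
  set C₀ : ℝ := (1/2) * ((p-1) * (2*L)^θ * (2*(CH:ℝ))^(1-lam) * C₂)
      * κ.toReal * ((k:ℝ)+1) ^ e' with hC₀
  have hC₀0 : 0 ≤ C₀ := by
    rw [hC₀]
    have : 0 ≤ κ.toReal := ENNReal.toReal_nonneg
    have h7 : (0:ℝ) ≤ p - 1 := by linarith
    positivity
  refine ⟨max C₀ 1, lt_of_lt_of_le one_pos (le_max_right _ _),
    min (min 1 (δ / (2*(k:ℝ)+2))) (R₀ / (2*(2*(k:ℝ)+2))),
    by positivity, ?_⟩
  intro ε hε x hx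
  obtain ⟨hε0, hεlt⟩ := hε
  have hε1 : ε ≤ 1 := le_of_lt (lt_of_lt_of_le hεlt ((min_le_left _ _).trans (min_le_left _ _)))
  have hεδ : (2*(k:ℝ)+2) * ε ≤ δ := by
    have h8 : ε ≤ δ / (2*(k:ℝ)+2) := le_of_lt (lt_of_lt_of_le hεlt ((min_le_left _ _).trans (min_le_right _ _)))
    rw [le_div_iff₀ (by positivity)] at h8
    linarith
  have hεR : (2*(k:ℝ)+2) * ε ≤ R₀ / 2 := by
    have h8 : ε ≤ R₀ / (2*(2*(k:ℝ)+2)) := le_of_lt (lt_of_lt_of_le hεlt (min_le_right _ _))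
    rw [le_div_iff₀ (by positivity)] at h8
    linarith
  set ρ : ℝ := (2*(k:ℝ)+2) * ε with hρ
  have hρ0 : 0 < ρ := by rw [hρ]; positivity
  set S : ℝ := c' * ρ ^ N with hS
  have hS0 : 0 < S := by rw [hS]; positivity
  set r : ℝ := ((k:ℝ)+1) * ε with hr
  have hr0 : 0 < r := by rw [hr]; positivity
  have hxn : ‖x‖ < (k:ℝ) * ε := by simpa [mem_ball, dist_zero_right] using hx
  -- membership facts
  have hmem : ∀ z : Ed d, ‖z‖ < ρ → z ∈ ball (0:Ed d) R₀ ∧ |u z| ≤ S := by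
    intro z hz
    constructor
    · rw [mem_ball, dist_zero_right]; linarith [hεR]
    · rw [hS]
      calc |u z| ≤ c' * ‖z‖ ^ N := hu z (by linarith [hεδ])
        _ ≤ c' * ρ ^ N := by
            exact mul_le_mul_of_nonneg_left (pow_le_pow_left₀ (norm_nonneg z) hz.le N) hc'0.le
  set T : ℝ := (p-1) * (2*L)^θ * (2*(CH:ℝ))^(1-lam) * (4*S)^q with hT
  have hT0 : 0 ≤ T := by
    rw [hT]; have h7 : (0:ℝ) ≤ p - 1 := by linarith
    positivity
  -- main pointwise bound
  have hmain : ∀ h : Ed d, h ∈ ball (0:Ed d) r → h ≠ 0 →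
      |(Jp p (u x - u (x + h)) + Jp p (u x - u (x - h))) / ‖h‖ ^ ((d : ℝ) + s * p)|
        ≤ T * ‖h‖ ^ (e' - (d:ℝ)) := by
    intro h hhb hne
    have hh0 : 0 < ‖h‖ := norm_pos_iff.2 hne
    have hhr : ‖h‖ < r := by simpa [mem_ball, dist_zero_right] using hhb
    have hh00 : 0 ≤ ‖h‖ := norm_nonneg h
    have hkk : (k:ℝ) * ε + r < ρ := by
      rw [hr, hρ]
      calc (k:ℝ) * ε + ((k:ℝ)+1) * ε = (2*(k:ℝ)+1) * ε := by ring
        _ < (2*(k:ℝ)+2) * ε := by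
            apply mul_lt_mul_of_pos_right _ hε0
            linarith
    have hxρ : ‖x‖ < ρ := by linarith
    have hxh1 : ‖x + h‖ < ρ := by
      calc ‖x + h‖ ≤ ‖x‖ + ‖h‖ := norm_add_le _ _
        _ < ρ := by linarith
    have hxh2 : ‖x - h‖ < ρ := by
      calc ‖x - h‖ ≤ ‖x‖ + ‖h‖ := norm_sub_le _ _
        _ < ρ := by linarith
    obtain ⟨hxB, hxu⟩ := hmem x hxρ
    obtain ⟨hx1B, hx1u⟩ := hmem _ hxh1
    obtain ⟨hx2B, hx2u⟩ := hmem _ hxh2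
    set a : ℝ := u x - u (x + h) with ha
    set b : ℝ := u x - u (x - h) with hb'
    have hm0 : (0:ℝ) ≤ |a| + |b| := by positivity
    have hab4S : |a| + |b| ≤ 4 * S := by
      have h9 : |a| ≤ |u x| + |u (x+h)| := abs_sub _ _
      have h10 : |b| ≤ |u x| + |u (x-h)| := abs_sub _ _
      linarith
    have habL : |a| + |b| ≤ 2 * L * ‖h‖ := by
      have h9 : |a| ≤ L * ‖h‖ := by
        have := lip x hxB (x+h) hx1B
        rw [show x + h - x = h by abel] at this
        rwa [ha, abs_sub_comm]
      have h10 : |b| ≤ L * ‖h‖ := by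
        have := lip x hxB (x-h) hx2B
        rw [show x - h - x = -h by abel, norm_neg] at this
        rwa [hb', abs_sub_comm]
      linarith
    have hw0 : (0:ℝ) ≤ |a + b| := abs_nonneg _
    have hwC : |a + b| ≤ 2 * ((CH:ℝ) * ‖h‖ ^ (α:ℝ) * ‖h‖) := by
      have h9 := taylor x hxB (x+h) hx1B
      have h10 := taylor x hxB (x-h) hx2B
      rw [show x + h - x = h by abel] at h9
      rw [show x - h - x = -h by abel, norm_neg] at h10
      have h11 : a + b = -((u (x+h) - u x - fderiv ℝ u x h)
          + (u (x-h) - u x - fderiv ℝ u x (-h))) := by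
        rw [ha, hb', map_neg]; ring
      rw [h11, abs_neg]
      calc |(u (x+h) - u x - fderiv ℝ u x h) + (u (x-h) - u x - fderiv ℝ u x (-h))|
          ≤ |u (x+h) - u x - fderiv ℝ u x h| + |u (x-h) - u x - fderiv ℝ u x (-h)| :=
            abs_add_le _ _
        _ ≤ 2 * ((CH:ℝ) * ‖h‖ ^ (α:ℝ) * ‖h‖) := by linarith
    have hw4S : |a + b| ≤ 4 * S := by
      calc |a + b| ≤ |a| + |b| := abs_add_le _ _
        _ ≤ 4 * S := hab4S
    -- bound on the numerator
    have hJ : |Jp p a + Jp p b| ≤ (p - 1) * (|a| + |b|) ^ (p - 2) * |a + b| := by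
      simpa [Jp] using abs_Jp_add_le hp a b
    have hmB : (|a| + |b|) ^ (p-2) ≤ ((2*L)^θ * (4*S)^(B-θ)) * ‖h‖ ^ θ := by
      have h12 := rpow_prod_bound hm0 habL hab4S hθ0 (by linarith : 0 ≤ B - θ)
      rw [show θ + (B - θ) = p - 2 by rw [hB]; ring] at h12
      refine h12.trans_eq ?_
      rw [Real.mul_rpow (by positivity) hh0.le]
      ring
    have hwB : |a + b| ≤ ((2*(CH:ℝ))^(1-lam) * (4*S)^lam) * ‖h‖ ^ ((1+(α:ℝ))*(1-lam)) := by
      have h12 := rpow_prod_bound hw0 hwC hw4S (by linarith : 0 ≤ 1 - lam) hlam0.le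
      rw [show (1 - lam) + lam = 1 by ring, Real.rpow_one] at h12
      refine h12.trans_eq ?_
      have h13 : 2 * ((CH:ℝ) * ‖h‖ ^ (α:ℝ) * ‖h‖) = (2*(CH:ℝ)) * ‖h‖ ^ ((α:ℝ)+1) := by
        rw [Real.rpow_add_one hh0.ne']; ring
      rw [h13, Real.mul_rpow (by positivity) (Real.rpow_nonneg hh0.le _),
        ← Real.rpow_mul (norm_nonneg h)]
      rw [show (α:ℝ)+1 = 1+(α:ℝ) by ring]
      ring
    have hnum : |Jp p a + Jp p b| ≤ T * (‖h‖ ^ θ * ‖h‖ ^ ((1+(α:ℝ))*(1-lam))) := by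
      calc |Jp p a + Jp p b| ≤ (p - 1) * (|a| + |b|) ^ (p - 2) * |a + b| := hJ
        _ ≤ (p - 1) * (((2*L)^θ * (4*S)^(B-θ)) * ‖h‖ ^ θ)
            * (((2*(CH:ℝ))^(1-lam) * (4*S)^lam) * ‖h‖ ^ ((1+(α:ℝ))*(1-lam))) := by
            have h14 : (0:ℝ) ≤ p - 1 := by linarith
            apply mul_le_mul (mul_le_mul_of_nonneg_left hmB h14) hwB hw0
            positivity
        _ = ((p-1) * (2*L)^θ * (2*(CH:ℝ))^(1-lam) * ((4*S)^(B-θ) * (4*S)^lam))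
            * (‖h‖ ^ θ * ‖h‖ ^ ((1+(α:ℝ))*(1-lam))) := by ring
        _ = T * (‖h‖ ^ θ * ‖h‖ ^ ((1+(α:ℝ))*(1-lam))) := by
            rw [hT, ← Real.rpow_add (by positivity : (0:ℝ) < 4*S),
              show B - θ + lam = q from (hq_def).symm]
    rw [abs_div, abs_of_pos (Real.rpow_pos_of_pos hh0 _),
      div_le_iff₀ (Real.rpow_pos_of_pos hh0 _)]
    calc |Jp p a + Jp p b| ≤ T * (‖h‖ ^ θ * ‖h‖ ^ ((1+(α:ℝ))*(1-lam))) := hnum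
      _ = T * ‖h‖ ^ (e' - (d:ℝ)) * ‖h‖ ^ ((d:ℝ) + s*p) := by
          have hcomb : ‖h‖ ^ θ * ‖h‖ ^ ((1+(α:ℝ))*(1-lam))
              = ‖h‖ ^ (e' - (d:ℝ)) * ‖h‖ ^ ((d:ℝ) + s*p) := by
            rw [← Real.rpow_add hh0, ← Real.rpow_add hh0]
            congr 1
            rw [he'_def, he_def, hA]; ring
          rw [hcomb]; ring
  -- integral estimate
  have h0ae : ∀ᵐ h ∂(volume.restrict (ball (0:Ed d) r)),
      ENNReal.ofReal ‖(Jp p (u x - u (x + h)) + Jp p (u x - u (x - h)))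
        / ‖h‖ ^ ((d : ℝ) + s * p)‖ ≤ ENNReal.ofReal (T * ‖h‖ ^ (e' - (d:ℝ))) := by
    have hne : ∀ᵐ h ∂(volume.restrict (ball (0:Ed d) r)), h ≠ (0:Ed d) :=
      ae_restrict_of_ae (by
        rw [ae_iff]
        simpa using measure_singleton (0:Ed d))
    filter_upwards [hne, ae_restrict_mem measurableSet_ball] with h hne hmem
    exact ENNReal.ofReal_le_ofReal (by
      rw [Real.norm_eq_abs]
      exact hmain h hmem hne)
  have hlint : (∫⁻ h in ball (0:Ed d) r, ENNReal.ofReal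
      ‖(Jp p (u x - u (x + h)) + Jp p (u x - u (x - h))) / ‖h‖ ^ ((d : ℝ) + s * p)‖)
      ≤ ENNReal.ofReal T * (κ * ENNReal.ofReal (r ^ e')) := by
    calc (∫⁻ h in ball (0:Ed d) r, ENNReal.ofReal
        ‖(Jp p (u x - u (x + h)) + Jp p (u x - u (x - h))) / ‖h‖ ^ ((d : ℝ) + s * p)‖)
        ≤ ∫⁻ h in ball (0:Ed d) r, ENNReal.ofReal (T * ‖h‖ ^ (e' - (d:ℝ))) :=
          lintegral_mono_ae h0ae
      _ = ∫⁻ h in ball (0:Ed d) r, ENNReal.ofReal T * ENNReal.ofReal (‖h‖ ^ (e' - (d:ℝ))) := by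
          congr 1; funext h
          rw [ENNReal.ofReal_mul hT0]
      _ = ENNReal.ofReal T * ∫⁻ h in ball (0:Ed d) r, ENNReal.ofReal (‖h‖ ^ (e' - (d:ℝ))) :=
          lintegral_const_mul' _ _ ENNReal.ofReal_ne_top
      _ ≤ ENNReal.ofReal T * (κ * ENNReal.ofReal (r ^ e')) :=
          mul_le_mul_right (hκ r hr0) _
  have hRHSne : ENNReal.ofReal T * (κ * ENNReal.ofReal (r ^ e')) ≠ ⊤ :=
    ENNReal.mul_ne_top ENNReal.ofReal_ne_top (ENNReal.mul_ne_top hκne ENNReal.ofReal_ne_top)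
  have hintabs : |∫ h in ball (0 : Ed d) ((↑k + 1) * ε),
      (Jp p (u x - u (x + h)) + Jp p (u x - u (x - h))) / ‖h‖ ^ ((d : ℝ) + s * p)|
      ≤ T * κ.toReal * r ^ e' := by
    have h15 := MeasureTheory.norm_integral_le_lintegral_norm
      (μ := volume.restrict (ball (0:Ed d) r))
      (f := fun h => (Jp p (u x - u (x + h)) + Jp p (u x - u (x - h)))
        / ‖h‖ ^ ((d : ℝ) + s * p))
    rw [Real.norm_eq_abs] at h15
    have h16 := ENNReal.toReal_mono hRHSne hlint
    rw [ENNReal.toReal_mul, ENNReal.toReal_mul, ENNReal.toReal_ofReal hT0,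
      ENNReal.toReal_ofReal (Real.rpow_nonneg hr0.le _)] at h16
    have hreq : ((k:ℝ) + 1) * ε = r := hr.symm
    rw [hreq]
    calc |∫ h in ball (0 : Ed d) r,
        (Jp p (u x - u (x + h)) + Jp p (u x - u (x - h))) / ‖h‖ ^ ((d : ℝ) + s * p)|
        ≤ (∫⁻ h in ball (0:Ed d) r, ENNReal.ofReal
            ‖(Jp p (u x - u (x + h)) + Jp p (u x - u (x - h))) / ‖h‖ ^ ((d : ℝ) + s * p)‖).toReal
          := h15
      _ ≤ T * (κ.toReal * r ^ e') := h16
      _ = T * κ.toReal * r ^ e' := by ring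
  -- final numeric computation
  have hSfin : (4*S)^q = C₂ * (ε ^ N : ℝ) ^ q := by
    rw [hC₂, ← Real.mul_rpow (by positivity) (by positivity)]
    congr 1
    rw [hS, hρ, mul_pow]
    ring
  have hεq : ((ε:ℝ) ^ N) ^ q = ε ^ ((N:ℝ) * q) := by
    rw [← Real.rpow_natCast ε N, ← Real.rpow_mul hε0.le]
  have hrq : r ^ e' = ((k:ℝ)+1) ^ e' * ε ^ e' := by
    rw [hr]; exact Real.mul_rpow (by positivity) hε0.le
  have hexp : ε ^ ((N:ℝ) * q) * ε ^ e' ≤ ε ^ n := by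
    rw [← Real.rpow_add hε0, ← Real.rpow_natCast ε n]
    apply Real.rpow_le_rpow_of_exponent_ge hε0 hε1
    have hN0 : (0:ℝ) ≤ (N:ℝ) := Nat.cast_nonneg N
    have h17 : (N:ℝ) * lam ≤ (N:ℝ) * q := mul_le_mul_of_nonneg_left hqlam hN0
    linarith
  calc |(1 / 2) * ∫ h in ball (0 : Ed d) ((↑k + 1) * ε),
      (Jp p (u x - u (x + h)) + Jp p (u x - u (x - h))) / ‖h‖ ^ ((d : ℝ) + s * p)|
      = (1/2) * |∫ h in ball (0 : Ed d) ((↑k + 1) * ε),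
        (Jp p (u x - u (x + h)) + Jp p (u x - u (x - h))) / ‖h‖ ^ ((d : ℝ) + s * p)| := by
        rw [abs_mul]; norm_num
    _ ≤ (1/2) * (T * κ.toReal * r ^ e') := by
        have := hintabs; linarith
    _ = C₀ * (ε ^ ((N:ℝ) * q) * ε ^ e') := by
        rw [hC₀, hT, hSfin, hεq, hrq]
        ring
    _ ≤ C₀ * ε ^ n := mul_le_mul_of_nonneg_left hexp hC₀0
    _ ≤ max C₀ 1 * ε ^ n :=
        mul_le_mul_of_nonneg_right (le_max_left _ _) (by positivity)
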